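/- Let K be a field of characteristic different from 2, t transcendental over K, U₁,…,Uₙ pairwise coprime nonconstant squarefree polynomials in K[t], ϑᵢ² = Uᵢ, and Fᵢ = K(t,ϑ₁,…,ϑᵢ). Then for each 1 ≤ i ≤ n: every element of Fᵢ that is algebraic over K already lies in K. -/

import Mathlib

open Polynomial IntermediateField

section Helpers
variable {K L : Type*} [Field K] [Field L] [Algebra K L]

/-- descent: V squarefree nonconstant, coprime to W: V*s² = r²*W impossible. -/
lemma fk_descent {V W : Polynomial K} (hV : Squarefree V) (hdeg : 0 < V.natDegree)
    (hcop : IsCoprime V W) :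
    ∀ s r : Polynomial K, s ≠ 0 → V * s ^ 2 = r ^ 2 * W → False := by
  have hV0 : V ≠ 0 := fun h => by simp [h] at hdeg
  suffices H : ∀ N : ℕ, ∀ s r : Polynomial K, s.natDegree = N → s ≠ 0 →
      V * s ^ 2 = r ^ 2 * W → False by
    intro s r hs heq; exact H s.natDegree s r rfl hs heq
  intro N
  induction N using Nat.strong_induction_on with
  | _ N ih =>
    intro s r hdegs hs heq
    have hVr2 : V ∣ r ^ 2 := hcop.dvd_of_dvd_mul_right ⟨s ^ 2, heq.symm⟩
    have hVr : V ∣ r := (hV.dvd_pow_iff_dvd two_ne_zero).mp hVr2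
    obtain ⟨r₁, rfl⟩ := hVr
    have heq2 : s ^ 2 = V * r₁ ^ 2 * W := by
      have := mul_left_cancel₀ hV0 (by linear_combination heq :
        V * (s ^ 2) = V * (V * r₁ ^ 2 * W))
      exact this
    have hVs : V ∣ s := (hV.dvd_pow_iff_dvd two_ne_zero).mp ⟨r₁ ^ 2 * W, by
      linear_combination heq2⟩
    obtain ⟨s₁, rfl⟩ := hVs
    have hs₁ : s₁ ≠ 0 := fun h => hs (by simp [h])
    have heq3 : V * s₁ ^ 2 = r₁ ^ 2 * W := by
      have := mul_left_cancel₀ hV0 (by linear_combination heq2 :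
        V * (V * s₁ ^ 2) = V * (r₁ ^ 2 * W))
      exact this
    refine ih s₁.natDegree ?_ s₁ r₁ rfl hs₁ heq3
    rw [← hdegs, Polynomial.natDegree_mul hV0 hs₁]
    omega

end Helpers
section Helpers2
variable {K L : Type*} [Field K] [Field L] [Algebra K L]

lemma fk_aeval_mem (S : IntermediateField K L) {x : L} (h : x ∈ S) (p : Polynomial K) :
    Polynomial.aeval x p ∈ S := by
  induction p using Polynomial.induction_on with
  | C a => simpa using S.algebraMap_mem a
  | add p q hp hq => rw [map_add]; exact S.add_mem hp hq
  | monomial k a hk =>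
    rw [pow_succ, ← mul_assoc, map_mul, Polynomial.aeval_X]
    exact S.mul_mem hk h

lemma fk_lin_indep (F : IntermediateField K L) {ϑ a b : L} (hϑ : ϑ ∉ F)
    (ha : a ∈ F) (hb : b ∈ F) (h : a + b * ϑ = 0) : a = 0 ∧ b = 0 := by
  by_cases hb0 : b = 0
  · refine ⟨?_, hb0⟩; rwa [hb0, zero_mul, add_zero] at h
  · exfalso
    apply hϑ
    have hϑeq : ϑ = -a / b := by
      rw [eq_div_iff hb0]; linear_combination h
    rw [hϑeq]
    exact F.div_mem (F.neg_mem ha) hb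

set_option maxHeartbeats 1000000 in
set_option synthInstance.maxHeartbeats 400000 in
lemma fk_lin_form (F : IntermediateField K L) {ϑ : L} (hu : ϑ ^ 2 ∈ F)
    (r : Polynomial ↥F) :
    ∃ a b : L, a ∈ F ∧ b ∈ F ∧ Polynomial.aeval ϑ r = a + b * ϑ := by
  induction r using Polynomial.induction_on with
  | C c =>
    refine ⟨(c : L), 0, c.2, F.zero_mem, ?_⟩
    rw [Polynomial.aeval_C, zero_mul, add_zero]
    rfl
  | add p q hp hq =>
    obtain ⟨a, b, ha, hb, hab⟩ := hp
    obtain ⟨a', b', ha', hb', hab'⟩ := hq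
    exact ⟨a + a', b + b', F.add_mem ha ha', F.add_mem hb hb', by
      rw [map_add, hab, hab']; ring⟩
  | monomial k c hk =>
    obtain ⟨a, b, ha, hb, hab⟩ := hk
    refine ⟨b * ϑ ^ 2, a, F.mul_mem hb hu, ha, ?_⟩
    have hx : (Polynomial.C c * Polynomial.X ^ (k + 1) : Polynomial ↥F)
        = (Polynomial.C c * Polynomial.X ^ k) * Polynomial.X := by ring
    rw [hx, map_mul, hab, Polynomial.aeval_X]
    ring

set_option maxHeartbeats 1000000 in
set_option synthInstance.maxHeartbeats 400000 in
lemma fk_quad (F : IntermediateField K L) {ϑ : L} (hu : ϑ ^ 2 ∈ F) (hϑ : ϑ ∉ F)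
    {x : L} (hx : x ∈ IntermediateField.adjoin ↥F {ϑ}) :
    ∃ a b : L, a ∈ F ∧ b ∈ F ∧ x = a + b * ϑ := by
  obtain ⟨r, s, hrs⟩ := (IntermediateField.mem_adjoin_simple_iff ↥F x).mp hx
  obtain ⟨a, b, ha, hb, hab⟩ := fk_lin_form F hu r
  obtain ⟨c, d, hc, hd, hcd⟩ := fk_lin_form F hu s
  by_cases hs0 : Polynomial.aeval ϑ s = 0
  · exact ⟨0, 0, F.zero_mem, F.zero_mem, by rw [hrs, hs0, div_zero]; ring⟩
  have hden : c ^ 2 - d ^ 2 * ϑ ^ 2 ∈ F := by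
    have h1 : c ^ 2 - d ^ 2 * ϑ ^ 2 = c * c - d * d * ϑ ^ 2 := by ring
    rw [h1]
    exact F.sub_mem (F.mul_mem hc hc) (F.mul_mem (F.mul_mem hd hd) hu)
  have he : c ^ 2 - d ^ 2 * ϑ ^ 2 ≠ 0 := by
    intro h
    by_cases hd0 : d = 0
    · have hc0 : c = 0 := by
        have : c ^ 2 = 0 := by rw [← h, hd0]; ring
        exact pow_eq_zero_iff two_ne_zero |>.mp this
      apply hs0; rw [hcd, hc0, hd0]; ring
    · apply hϑ
      have h2 : (ϑ - c / d) * (ϑ + c / d) = 0 := by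
        field_simp
        linear_combination -h
      rcases mul_eq_zero.mp h2 with h1 | h1
      · have : ϑ = c / d := by linear_combination h1
        rw [this]; exact F.div_mem hc hd
      · have : ϑ = -(c / d) := by linear_combination h1
        rw [this]; exact F.neg_mem (F.div_mem hc hd)
  have hinv : (Polynomial.aeval ϑ s)⁻¹
      = c / (c ^ 2 - d ^ 2 * ϑ ^ 2) + (-d / (c ^ 2 - d ^ 2 * ϑ ^ 2)) * ϑ := by
    apply inv_eq_of_mul_eq_one_right
    rw [hcd]
    field_simp
    ring
  refine ⟨a * (c / (c ^ 2 - d ^ 2 * ϑ ^ 2)) + b * (-d / (c ^ 2 - d ^ 2 * ϑ ^ 2)) * ϑ ^ 2,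
    a * (-d / (c ^ 2 - d ^ 2 * ϑ ^ 2)) + b * (c / (c ^ 2 - d ^ 2 * ϑ ^ 2)), ?_, ?_, ?_⟩
  · exact F.add_mem (F.mul_mem ha (F.div_mem hc hden))
      (F.mul_mem (F.mul_mem hb (F.div_mem (F.neg_mem hd) hden)) hu)
  · exact F.add_mem (F.mul_mem ha (F.div_mem (F.neg_mem hd) hden))
      (F.mul_mem hb (F.div_mem hc hden))
  · rw [hrs, div_eq_mul_inv, hinv, hab]
    ring

/-- conjugation: applying a `K`-polynomial to `a + bϑ` and `a - bϑ`. -/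
lemma fk_conj (F : IntermediateField K L) {ϑ : L} (hu : ϑ ^ 2 ∈ F)
    (P : Polynomial K) {a b : L} (ha : a ∈ F) (hb : b ∈ F) :
    ∃ A B : L, A ∈ F ∧ B ∈ F ∧ Polynomial.aeval (a + b * ϑ) P = A + B * ϑ
      ∧ Polynomial.aeval (a - b * ϑ) P = A - B * ϑ := by
  induction P using Polynomial.induction_on with
  | C c =>
    exact ⟨algebraMap K L c, 0, F.algebraMap_mem c, F.zero_mem, by simp, by simp⟩
  | add p q hp hq =>
    obtain ⟨A, B, hA, hB, h1, h2⟩ := hp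
    obtain ⟨A', B', hA', hB', h1', h2'⟩ := hq
    exact ⟨A + A', B + B', F.add_mem hA hA', F.add_mem hB hB',
      by rw [map_add, h1, h1']; ring, by rw [map_add, h2, h2']; ring⟩
  | monomial k c hk =>
    obtain ⟨A, B, hA, hB, h1, h2⟩ := hk
    have hx : (Polynomial.C c * Polynomial.X ^ (k + 1) : Polynomial K)
        = (Polynomial.C c * Polynomial.X ^ k) * Polynomial.X := by ring
    refine ⟨A * a + B * b * ϑ ^ 2, A * b + B * a,
      F.add_mem (F.mul_mem hA ha) (F.mul_mem (F.mul_mem hB hb) hu),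
      F.add_mem (F.mul_mem hA hb) (F.mul_mem hB ha), ?_, ?_⟩
    · rw [hx, map_mul, h1, Polynomial.aeval_X]; ring
    · rw [hx, map_mul, h2, Polynomial.aeval_X]; ring

end Helpers2
lemma fk_claimC (K L : Type*) [Field K] [Field L] [Algebra K L]
    (hchar : ringChar K ≠ 2)
    (t : L) (ht : Transcendental K t)
    (n : ℕ) (U : Fin n → Polynomial K)
    (hU : ∀ i, 0 < (U i).natDegree)
    (hcop : ∀ i j, i ≠ j → IsCoprime (U i) (U j))
    (hsf : ∀ i, Squarefree (U i))
    (ϑ : Fin n → L) (hϑ : ∀ i, (ϑ i) ^ 2 = Polynomial.aeval t (U i))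
    (F : ℕ → IntermediateField K L)
    (hF : ∀ m : ℕ, F m =
      IntermediateField.adjoin K ({t} ∪ (ϑ '' {j : Fin n | (j : ℕ) < m}))) :
    ∀ m : ℕ, ∀ η : L, η ∈ F m → ∀ p q : Polynomial K, q ≠ 0 →
      η ^ 2 * Polynomial.aeval t q = Polynomial.aeval t p →
      ∃ S : Finset (Fin n), (∀ j ∈ S, (j : ℕ) < m) ∧
        ∃ r s : Polynomial K, s ≠ 0 ∧ p * q * s ^ 2 = r ^ 2 * ∏ j ∈ S, U j := by
  have hinj : Function.Injective (Polynomial.aeval t : Polynomial K →ₐ[K] L) :=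
    transcendental_iff_injective.mp ht
  have hinj' : ∀ p : Polynomial K, Polynomial.aeval t p = 0 → p = 0 := by
    intro p h; exact hinj (by rw [h, map_zero])
  have h2K : (2 : K) ≠ 0 := by
    intro h
    have hd : ringChar K ∣ 2 := (CharP.cast_eq_zero_iff K (ringChar K) 2).mp (by
      exact_mod_cast h)
    rcases CharP.char_is_prime_or_zero K (ringChar K) with hp | h0
    · exact hchar ((Nat.prime_dvd_prime_iff_eq hp Nat.prime_two).mp hd)
    · rw [h0] at hd; simp at hd
  have h2L : (2 : L) ≠ 0 := by
    intro h
    apply h2K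
    apply (algebraMap K L).injective
    rw [map_ofNat, map_zero, h]
  intro m
  induction m with
  | zero =>
    intro η hη p q hq heq
    by_cases hη0 : η = 0
    · have hp0 : p = 0 := hinj' p (by rw [← heq, hη0]; ring)
      exact ⟨∅, by simp, 0, 1, one_ne_zero, by rw [hp0]; ring⟩
    · have hmem : η ∈ IntermediateField.adjoin K {t} := by
        have hsetempty : {j : Fin n | (j : ℕ) < 0} = (∅ : Set (Fin n)) := by
          ext j; simp
        have h0 : F 0 = IntermediateField.adjoin K {t} := by
          rw [hF 0, hsetempty]
          simp
        rwa [h0] at hη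
      obtain ⟨p₀, q₀, h₀⟩ := (IntermediateField.mem_adjoin_simple_iff K η).mp hmem
      have hq₀L : Polynomial.aeval t q₀ ≠ 0 := by
        intro h; apply hη0; rw [h₀, h, div_zero]
      have hp₀L : Polynomial.aeval t p₀ ≠ 0 := by
        intro h; apply hη0; rw [h₀, h, zero_div]
      have hp₀ : p₀ ≠ 0 := fun h => hp₀L (by rw [h, map_zero])
      have hηq : η * Polynomial.aeval t q₀ = Polynomial.aeval t p₀ := by
        rw [h₀, div_mul_cancel₀ _ hq₀L]
      have hsq : η ^ 2 * (Polynomial.aeval t q₀) ^ 2 = (Polynomial.aeval t p₀) ^ 2 := by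
        rw [← mul_pow, hηq]
      have hpoly : p * q₀ ^ 2 = p₀ ^ 2 * q := by
        apply hinj
        simp only [map_mul, map_pow]
        linear_combination (-(Polynomial.aeval t q₀) ^ 2) * heq +
          (Polynomial.aeval t q) * hsq
      refine ⟨∅, by simp, p * q₀, p₀, hp₀, ?_⟩
      rw [Finset.prod_empty, mul_one]
      linear_combination (-p) * hpoly
  | succ m IH =>
    intro η hη p q hq heq
    by_cases hmn : n ≤ m
    · have hset : {j : Fin n | (j : ℕ) < m + 1} = {j : Fin n | (j : ℕ) < m} := by
        ext j; have := j.isLt; simp only [Set.mem_setOf_eq]; omega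
      have hFF : F (m + 1) = F m := by rw [hF (m + 1), hF m, hset]
      rw [hFF] at hη
      obtain ⟨S, hS, rest⟩ := IH η hη p q hq heq
      exact ⟨S, fun j hj => Nat.lt_succ_of_lt (hS j hj), rest⟩
    · push_neg at hmn
      set i : Fin n := ⟨m, hmn⟩ with hidef
      have hUine : U i ≠ 0 := by intro h; have hd := hU i; rw [h] at hd; simp at hd
      have htm : t ∈ F m := by
        rw [hF m]; exact IntermediateField.subset_adjoin K _ (Or.inl rfl)
      have hu : ϑ i ^ 2 ∈ F m := by rw [hϑ i]; exact fk_aeval_mem _ htm (U i)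
      -- ϑ i ∉ F m
      have hnot : ϑ i ∉ F m := by
        intro hmem
        obtain ⟨S, hS, r, s, hs, heqD⟩ := IH (ϑ i) hmem (U i) 1 one_ne_zero
          (by rw [hϑ i, map_one, mul_one])
        refine fk_descent (hsf i) (hU i)
          (IsCoprime.prod_right fun j hj => hcop i j ?_) s r hs (by linear_combination heqD)
        intro hij
        have := hS j hj
        rw [← hij] at this
        simp [hidef] at this
      -- membership translation
      have hset : ({t} ∪ ϑ '' {j : Fin n | (j : ℕ) < m + 1})
          = ({t} ∪ ϑ '' {j : Fin n | (j : ℕ) < m}) ∪ {ϑ i} := by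
        have h1 : {j : Fin n | (j : ℕ) < m + 1} = {j : Fin n | (j : ℕ) < m} ∪ {i} := by
          ext j
          simp only [Set.mem_setOf_eq, Set.mem_union, Set.mem_singleton_iff]
          constructor
          · intro h
            rcases Nat.lt_succ_iff_lt_or_eq.mp h with h | h
            · exact Or.inl h
            · exact Or.inr (Fin.ext h)
          · rintro (h | rfl)
            · exact Nat.lt_succ_of_lt h
            · exact Nat.lt_succ_self m
        rw [h1, Set.image_union, Set.image_singleton, Set.union_assoc]
      have hFsucc : F (m + 1) = (IntermediateField.adjoin (↥(F m)) {ϑ i}).restrictScalars K := by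
        rw [hF (m + 1), hset, hF m]
        exact (IntermediateField.adjoin_adjoin_left K _ {ϑ i}).symm
      have hηadj : η ∈ IntermediateField.adjoin (↥(F m)) {ϑ i} := by
        rw [hFsucc] at hη
        exact (IntermediateField.mem_restrictScalars K).mp hη
      obtain ⟨a, b, ha, hb, hab⟩ := fk_quad (F m) hu hnot hηadj
      have hq' : Polynomial.aeval t q ≠ 0 := fun h => hq (hinj' q h)
      have hη2 : η ^ 2 ∈ F m := by
        have hd : η ^ 2 = Polynomial.aeval t p / Polynomial.aeval t q := by
          rw [eq_div_iff hq']; exact heq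
        rw [hd]
        exact (F m).div_mem (fk_aeval_mem _ htm p) (fk_aeval_mem _ htm q)
      have hmemA : a ^ 2 + b ^ 2 * (ϑ i) ^ 2 - η ^ 2 ∈ F m := by
        have h1 : a ^ 2 + b ^ 2 * (ϑ i) ^ 2 - η ^ 2
            = a * a + b * b * (ϑ i) ^ 2 - η ^ 2 := by ring
        rw [h1]
        exact (F m).sub_mem ((F m).add_mem ((F m).mul_mem ha ha)
          ((F m).mul_mem ((F m).mul_mem hb hb) hu)) hη2
      have h2F : (2 : L) * a * b ∈ F m := by
        have h2 : (2 : L) ∈ F m := by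
          have := (F m).algebraMap_mem (2 : K)
          rwa [map_ofNat] at this
        exact (F m).mul_mem ((F m).mul_mem h2 ha) hb
      have hexp : (a ^ 2 + b ^ 2 * (ϑ i) ^ 2 - η ^ 2) + ((2 : L) * a * b) * ϑ i = 0 := by
        rw [hab]; ring
      obtain ⟨-, hB⟩ := fk_lin_indep (F m) hnot hmemA h2F hexp
      have hab0 : a * b = 0 := by
        have h2ab : (2 : L) * (a * b) = 0 := by linear_combination hB
        exact (mul_eq_zero.mp h2ab).resolve_left h2L
      rcases mul_eq_zero.mp hab0 with ha0 | hb0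
      · -- a = 0 : η = b ϑ i
        have hbU : b ^ 2 * Polynomial.aeval t (U i * q) = Polynomial.aeval t p := by
          rw [map_mul, ← hϑ i]
          have hη' : η = b * ϑ i := by rw [hab, ha0]; ring
          linear_combination heq - (Polynomial.aeval t q) * (η + b * ϑ i) * hη'
        obtain ⟨S, hS, r, s, hs, heqC⟩ := IH b hb p (U i * q) (mul_ne_zero hUine hq) hbU
        have hiS : i ∉ S := fun hiS => by
          have := hS i hiS; simp [hidef] at this
        refine ⟨insert i S, ?_, r, s * U i, mul_ne_zero hs hUine, ?_⟩
        · intro j hj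
          rcases Finset.mem_insert.mp hj with rfl | hj
          · exact Nat.lt_succ_self m
          · exact Nat.lt_succ_of_lt (hS j hj)
        · rw [Finset.prod_insert hiS]
          linear_combination (U i) * heqC
      · -- b = 0
        have hη' : η ∈ F m := by
          rw [hab, hb0]; simpa using ha
        obtain ⟨S, hS, rest⟩ := IH η hη' p q hq heq
        exact ⟨S, fun j hj => Nat.lt_succ_of_lt (hS j hj), rest⟩
lemma fk_sqfree_prod {K : Type*} [Field K] {n : ℕ} (U : Fin n → Polynomial K)
    (hcop : ∀ i j, i ≠ j → IsCoprime (U i) (U j)) (hsf : ∀ i, Squarefree (U i))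
    (S : Finset (Fin n)) : Squarefree (∏ j ∈ S, U j) := by
  induction S using Finset.induction_on with
  | empty => simp only [Finset.prod_empty]; exact squarefree_one
  | insert _ _ haS ih =>
    rw [Finset.prod_insert haS]
    refine squarefree_mul_iff.mpr ⟨?_, hsf _, ih⟩
    exact (IsCoprime.prod_right fun j hjS =>
      hcop _ j (fun h => haS (by rwa [h]))).isRelPrime

theorem fried_kollar_algebraic_mem (K L : Type*) [Field K] [Field L] [Algebra K L]
    (hchar : ringChar K ≠ 2)
    (t : L) (ht : Transcendental K t)
    (n : ℕ) (U : Fin n → Polynomial K)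
    (hU : ∀ i, 0 < (U i).natDegree)
    (hcop : ∀ i j, i ≠ j → IsCoprime (U i) (U j))
    (hsf : ∀ i, Squarefree (U i))
    (ϑ : Fin n → L) (hϑ : ∀ i, (ϑ i) ^ 2 = Polynomial.aeval t (U i))
    (F : ℕ → IntermediateField K L)
    (hF : ∀ m : ℕ, F m =
      IntermediateField.adjoin K ({t} ∪ (ϑ '' {j : Fin n | (j : ℕ) < m}))) :
    ∀ i : Fin n, ∀ η : L, η ∈ F ((i : ℕ) + 1) → IsAlgebraic K η →
      ∃ k : K, algebraMap K L k = η := by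
  have hinj : Function.Injective (Polynomial.aeval t : Polynomial K →ₐ[K] L) :=
    transcendental_iff_injective.mp ht
  have hinj' : ∀ p : Polynomial K, Polynomial.aeval t p = 0 → p = 0 := by
    intro p h; exact hinj (by rw [h, map_zero])
  have h2K : (2 : K) ≠ 0 := by
    intro h
    have hd : ringChar K ∣ 2 := (CharP.cast_eq_zero_iff K (ringChar K) 2).mp (by
      exact_mod_cast h)
    rcases CharP.char_is_prime_or_zero K (ringChar K) with hp | h0
    · exact hchar ((Nat.prime_dvd_prime_iff_eq hp Nat.prime_two).mp hd)
    · rw [h0] at hd; simp at hd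
  have h2L : (2 : L) ≠ 0 := by
    intro h
    apply h2K
    apply (algebraMap K L).injective
    rw [map_ofNat, map_zero, h]
  have claimC := fk_claimC K L hchar t ht n U hU hcop hsf ϑ hϑ F hF
  suffices main : ∀ m : ℕ, ∀ η : L, η ∈ F m → IsAlgebraic K η →
      ∃ k : K, algebraMap K L k = η by
    intro i η hmem halg
    exact main _ η hmem halg
  intro m
  induction m with
  | zero =>
    intro η hη halg
    have hsetempty : {j : Fin n | (j : ℕ) < 0} = (∅ : Set (Fin n)) := by ext j; simp
    have h0 : F 0 = IntermediateField.adjoin K {t} := by rw [hF 0, hsetempty]; simp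
    rw [h0] at hη
    by_cases hη0 : η = 0
    · exact ⟨0, by simp [hη0]⟩
    by_cases hrange : ∃ k : K, algebraMap K L k = η
    · exact hrange
    exfalso
    obtain ⟨p₀, q₀, h₀⟩ := (IntermediateField.mem_adjoin_simple_iff K η).mp hη
    have hq₀L : Polynomial.aeval t q₀ ≠ 0 := by
      intro h; apply hη0; rw [h₀, h, div_zero]
    letI : FiniteDimensional K K⟮η⟯ :=
      IntermediateField.adjoin.finiteDimensional halg.isIntegral
    haveI hKη : Algebra.IsIntegral K K⟮η⟯ := Algebra.IsIntegral.of_finite K K⟮η⟯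
    set η' : K⟮η⟯ := ⟨η, IntermediateField.mem_adjoin_simple_self K η⟩ with hη'def
    set g : Polynomial K⟮η⟯ := p₀.map (algebraMap K K⟮η⟯)
      - Polynomial.C η' * q₀.map (algebraMap K K⟮η⟯) with hgdef
    have hg0 : g ≠ 0 := by
      intro h
      have hcoeff : ∀ k : ℕ, (algebraMap K K⟮η⟯) (p₀.coeff k)
          = η' * (algebraMap K K⟮η⟯) (q₀.coeff k) := by
        intro k
        have h2 := congrArg (fun r => Polynomial.coeff r k) h
        simpa [hgdef, Polynomial.coeff_map, Polynomial.coeff_C_mul, sub_eq_zero] using h2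
      have hq₀ : q₀ ≠ 0 := fun h' => hq₀L (by rw [h', map_zero])
      obtain ⟨k, hk⟩ : ∃ k, q₀.coeff k ≠ 0 := by
        by_contra hall; push_neg at hall
        exact hq₀ (Polynomial.ext fun k => by simp [hall k])
      apply hrange
      refine ⟨p₀.coeff k / q₀.coeff k, ?_⟩
      have hφq : (algebraMap K K⟮η⟯) (q₀.coeff k) ≠ 0 := by
        intro hz
        exact hk ((algebraMap K K⟮η⟯).injective (by rw [hz, map_zero]))
      have hη'eq : η' = algebraMap K K⟮η⟯ (p₀.coeff k / q₀.coeff k) := by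
        rw [map_div₀, eq_div_iff hφq]
        exact (hcoeff k).symm
      have := congrArg (algebraMap K⟮η⟯ L) hη'eq
      rw [← IsScalarTower.algebraMap_apply K K⟮η⟯ L] at this
      exact this.symm
    have hgt : Polynomial.aeval t g = 0 := by
      rw [hgdef, map_sub, map_mul, Polynomial.aeval_map_algebraMap,
        Polynomial.aeval_map_algebraMap, Polynomial.aeval_C]
      have hπ : (algebraMap K⟮η⟯ L) η' = η := rfl
      rw [hπ, h₀, sub_eq_zero, div_mul_cancel₀ _ hq₀L]
    have halgt : IsAlgebraic K⟮η⟯ t := ⟨g, hg0, hgt⟩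
    exact ht (isIntegral_trans t halgt.isIntegral).isAlgebraic
  | succ m IH =>
    intro η hη halg
    by_cases hmn : n ≤ m
    · have hset : {j : Fin n | (j : ℕ) < m + 1} = {j : Fin n | (j : ℕ) < m} := by
        ext j; have := j.isLt; simp only [Set.mem_setOf_eq]; omega
      have hFF : F (m + 1) = F m := by rw [hF (m + 1), hF m, hset]
      rw [hFF] at hη
      exact IH η hη halg
    · push_neg at hmn
      set i : Fin n := ⟨m, hmn⟩ with hidef
      have hUine : U i ≠ 0 := by
        intro h; have hd := hU i; rw [h] at hd; simp at hd
      have htm : t ∈ F m := by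
        rw [hF m]; exact IntermediateField.subset_adjoin K _ (Or.inl rfl)
      have hu : ϑ i ^ 2 ∈ F m := by rw [hϑ i]; exact fk_aeval_mem _ htm (U i)
      have hnot : ϑ i ∉ F m := by
        intro hmem
        obtain ⟨S, hS, r, s, hs, heqD⟩ := claimC m (ϑ i) hmem (U i) 1 one_ne_zero
          (by rw [hϑ i, map_one, mul_one])
        refine fk_descent (hsf i) (hU i)
          (IsCoprime.prod_right fun j hj => hcop i j ?_) s r hs (by linear_combination heqD)
        intro hij
        have := hS j hj
        rw [← hij] at this
        simp [hidef] at this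
      have hset : ({t} ∪ ϑ '' {j : Fin n | (j : ℕ) < m + 1})
          = ({t} ∪ ϑ '' {j : Fin n | (j : ℕ) < m}) ∪ {ϑ i} := by
        have h1 : {j : Fin n | (j : ℕ) < m + 1} = {j : Fin n | (j : ℕ) < m} ∪ {i} := by
          ext j
          simp only [Set.mem_setOf_eq, Set.mem_union, Set.mem_singleton_iff]
          constructor
          · intro h
            rcases Nat.lt_succ_iff_lt_or_eq.mp h with h | h
            · exact Or.inl h
            · exact Or.inr (Fin.ext h)
          · rintro (h | rfl)
            · exact Nat.lt_succ_of_lt h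
            · exact Nat.lt_succ_self m
        rw [h1, Set.image_union, Set.image_singleton, Set.union_assoc]
      have hFsucc : F (m + 1) = (IntermediateField.adjoin (↥(F m)) {ϑ i}).restrictScalars K := by
        rw [hF (m + 1), hset, hF m]
        exact (IntermediateField.adjoin_adjoin_left K _ {ϑ i}).symm
      have hηadj : η ∈ IntermediateField.adjoin (↥(F m)) {ϑ i} := by
        rw [hFsucc] at hη
        exact (IntermediateField.mem_restrictScalars K).mp hη
      obtain ⟨a, b, ha, hb, hab⟩ := fk_quad (F m) hu hnot hηadj
      set P := minpoly K η with hPdef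
      have hP0 : P ≠ 0 := minpoly.ne_zero halg.isIntegral
      have haP : Polynomial.aeval η P = 0 := minpoly.aeval K η
      obtain ⟨A, B, hA, hB, h1, h2⟩ := fk_conj (F m) hu P ha hb
      rw [hab, h1] at haP
      obtain ⟨hA0, hB0⟩ := fk_lin_indep (F m) hnot hA hB haP
      have hconj : Polynomial.aeval (a - b * ϑ i) P = 0 := by
        rw [h2, hA0, hB0]; ring
      have halg' : IsAlgebraic K (a - b * ϑ i) := ⟨P, hP0, hconj⟩
      have h2inv : algebraMap K L (2⁻¹ : K) = (2 : L)⁻¹ := by rw [map_inv₀, map_ofNat]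
      have htwoinv : IsAlgebraic K ((2 : L)⁻¹) := by
        rw [← h2inv]; exact isAlgebraic_algebraMap _
      have haalg : IsAlgebraic K a := by
        have hrw : a = (η + (a - b * ϑ i)) * (2 : L)⁻¹ := by
          rw [hab]; field_simp; ring
        rw [hrw]
        exact ((halg.isIntegral.add halg'.isIntegral).mul htwoinv.isIntegral).isAlgebraic
      have hbθalg : IsAlgebraic K (b * ϑ i) := by
        have hrw : b * ϑ i = (η - (a - b * ϑ i)) * (2 : L)⁻¹ := by
          rw [hab]; field_simp; ring
        rw [hrw]
        exact ((halg.isIntegral.sub halg'.isIntegral).mul htwoinv.isIntegral).isAlgebraic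
      obtain ⟨ka, hka⟩ := IH a ha haalg
      have hsqmem : (b * ϑ i) ^ 2 ∈ F m := by
        have hrw : (b * ϑ i) ^ 2 = b * b * (ϑ i ^ 2) := by ring
        rw [hrw]
        exact (F m).mul_mem ((F m).mul_mem hb hb) hu
      have hsqalg : IsAlgebraic K ((b * ϑ i) ^ 2) := by
        rw [sq]
        exact (hbθalg.isIntegral.mul hbθalg.isIntegral).isAlgebraic
      obtain ⟨c, hc⟩ := IH ((b * ϑ i) ^ 2) hsqmem hsqalg
      by_cases hbθ0 : b * ϑ i = 0
      · exact ⟨ka, by rw [hab, hbθ0, add_zero]; exact hka⟩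
      have hc0 : c ≠ 0 := by
        intro h
        apply hbθ0
        have hz : (b * ϑ i) ^ 2 = 0 := by rw [← hc, h, map_zero]
        exact (pow_eq_zero_iff two_ne_zero).mp hz
      have hFle : F m ≤ F (m + 1) := by
        rw [hF m, hF (m + 1)]
        apply IntermediateField.adjoin.mono
        apply Set.union_subset_union_right
        apply Set.image_mono
        intro j hj
        exact Nat.lt_succ_of_lt hj
      have hbθmem : b * ϑ i ∈ F (m + 1) := by
        have hrw : b * ϑ i = η - a := by rw [hab]; ring
        rw [hrw]
        exact (F (m + 1)).sub_mem hη (hFle ha)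
      have heqc : (b * ϑ i) ^ 2 * Polynomial.aeval t (1 : Polynomial K)
          = Polynomial.aeval t (Polynomial.C c) := by
        rw [map_one, mul_one, Polynomial.aeval_C, hc]
      obtain ⟨S, hS, r, s, hs, heqq⟩ :=
        claimC (m + 1) (b * ϑ i) hbθmem (Polynomial.C c) 1 one_ne_zero heqc
      rcases S.eq_empty_or_nonempty with rfl | hSne
      · rw [Finset.prod_empty] at heqq
        have hsl : s.leadingCoeff ≠ 0 := Polynomial.leadingCoeff_ne_zero.mpr hs
        have hlc : c * s.leadingCoeff ^ 2 = r.leadingCoeff ^ 2 := by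
          have h3 := congrArg Polynomial.leadingCoeff heqq
          simpa [Polynomial.leadingCoeff_mul, Polynomial.leadingCoeff_pow] using h3
        set k₀ := r.leadingCoeff / s.leadingCoeff with hk₀def
        have hk₀ : k₀ ^ 2 = c := by
          rw [hk₀def, div_pow, eq_comm, eq_div_iff (pow_ne_zero 2 hsl)]
          linear_combination hlc
        have hsq2 : (b * ϑ i) ^ 2 = (algebraMap K L k₀) ^ 2 := by
          rw [← map_pow, hk₀, hc]
        have hfact : (b * ϑ i - algebraMap K L k₀) * (b * ϑ i + algebraMap K L k₀) = 0 := by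
          linear_combination hsq2
        rcases mul_eq_zero.mp hfact with h | h
        · refine ⟨ka + k₀, ?_⟩
          rw [map_add, hka, hab]
          have hbk : b * ϑ i = algebraMap K L k₀ := by linear_combination h
          rw [hbk]
        · refine ⟨ka - k₀, ?_⟩
          rw [map_sub, hka, hab]
          have hbk : b * ϑ i = -algebraMap K L k₀ := by linear_combination h
          rw [hbk]
          ring
      · exfalso
        set V := ∏ j ∈ S, U j with hVdef
        have hUj0 : ∀ j : Fin n, U j ≠ 0 := by
          intro j h; have hd := hU j; rw [h] at hd; simp at hd
        have hVsf : Squarefree V := fk_sqfree_prod U hcop hsf S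
        have hVdeg : 0 < V.natDegree := by
          rw [hVdef, Polynomial.natDegree_prod _ _ (fun j _ => hUj0 j)]
          obtain ⟨j₀, hj₀⟩ := hSne
          exact Finset.sum_pos' (fun j _ => Nat.zero_le _) ⟨j₀, hj₀, hU j₀⟩
        have hr0 : r ≠ 0 := by
          intro h
          rw [h] at heqq
          have hz : Polynomial.C c * s ^ 2 = 0 := by linear_combination heqq
          exact (mul_ne_zero (by simpa using hc0) (pow_ne_zero 2 hs)) hz
        have hcopV : IsCoprime V (Polynomial.C c) := ⟨0, Polynomial.C c⁻¹, by
          rw [zero_mul, zero_add, ← Polynomial.C_mul, inv_mul_cancel₀ hc0, Polynomial.C_1]⟩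
        exact fk_descent hVsf hVdeg hcopV r s hr0 (by linear_combination -heqq)
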